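/- Let α be a finite alphabet consisting of exactly two distinct letters a and b. Then each of the families of symmetric definite, left-sided comet, right-sided comet, and two-sided comet languages over α is incomparable to each of the families of finite, nilpotent, definite, ordered, and non-counting languages over α. -/

import Mathlib

open Language Computability

universe u

variable {α : Type}

/-- The n-fold repetition (power) of a word. -/
def wordPow (y : List α) : ℕ → List α
  | 0 => []
  | n + 1 => y ++ wordPow y n

/-- A star language: the Kleene star of some regular language. -/
def IsStarLang (L : Language α) : Prop :=
  ∃ H : Language α, H.IsRegular ∧ L = H∗

/-- A left-sided comet. -/
def IsLeftComet (L : Language α) : Prop :=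
  ∃ E G : Language α, E.IsRegular ∧ G.IsRegular ∧ G ≠ 0 ∧ G ≠ 1 ∧ L = E * G∗

/-- A right-sided comet. -/
def IsRightComet (L : Language α) : Prop :=
  ∃ G H : Language α, G.IsRegular ∧ H.IsRegular ∧ G ≠ 0 ∧ G ≠ 1 ∧ L = G∗ * H

/-- A two-sided comet. -/
def IsTwoComet (L : Language α) : Prop :=
  ∃ E G H : Language α, E.IsRegular ∧ G.IsRegular ∧ H.IsRegular ∧
    G ≠ 0 ∧ G ≠ 1 ∧ L = E * G∗ * H

/-- A regular expression is union-free if it is built from the atoms `0` (empty language)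
and single letters using only concatenation and Kleene star. -/
def RegularExpression.UnionFree : RegularExpression α → Prop
  | RegularExpression.zero => True
  | RegularExpression.epsilon => False
  | RegularExpression.char _ => True
  | RegularExpression.plus _ _ => False
  | RegularExpression.comp r s => r.UnionFree ∧ s.UnionFree
  | RegularExpression.star r => r.UnionFree

/-- A union-free language: the language of a union-free regular expression. -/
def IsUnionFree (L : Language α) : Prop :=
  ∃ r : RegularExpression α, r.UnionFree ∧ r.matches' = L

/-- A monoidal language. -/
def IsMonoidal (L : Language α) : Prop := L = (⊤ : Language α)

/-- The language of one-letter words with letters from `X`. -/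
def lettersLang (X : Set α) : Language α := {w : List α | ∃ a ∈ X, w = [a]}

/-- A combinational language: `⊤ · X` for a set `X` of one-letter words. -/
def IsCombinational (L : Language α) : Prop :=
  ∃ X : Set α, L = (⊤ : Language α) * lettersLang X

/-- A symmetric definite language: `E · ⊤ · H` with `E, H` regular. -/
def IsSymDef (L : Language α) : Prop :=
  ∃ E H : Language α, E.IsRegular ∧ H.IsRegular ∧ L = E * (⊤ : Language α) * H

/-- A nilpotent language: finite or with finite complement. -/
def IsNilpotentLang (L : Language α) : Prop := L.Finite ∨ (Lᶜ : Language α).Finite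

/-- A definite language: `A ∪ ⊤ · B` with `A, B` finite. -/
def IsDefinite (L : Language α) : Prop :=
  ∃ A B : Language α, A.Finite ∧ B.Finite ∧ L = A + (⊤ : Language α) * B  -- `+` of languages is union

/-- An ordered language: accepted by a DFA with linearly ordered state set
whose transition maps are all monotone. -/
def IsOrdered (L : Language α) : Prop :=
  ∃ (σ : Type) (_ : Fintype σ) (_ : LinearOrder σ) (M : DFA α σ),
    (∀ a : α, Monotone fun q => M.step q a) ∧ M.accepts = L

/-- The non-counting property. -/
def HasNonCounting (L : Language α) : Prop :=
  ∃ k : ℕ, 1 ≤ k ∧ ∀ x y z : List α,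
    (x ++ wordPow y k ++ z ∈ L ↔ x ++ wordPow y (k + 1) ++ z ∈ L)

/-- A non-counting (star-free) regular language. -/
def IsNonCounting (L : Language α) : Prop := L.IsRegular ∧ HasNonCounting L

/-- The power-separating property. -/
def HasPowerSep (L : Language α) : Prop :=
  ∃ m : ℕ, 1 ≤ m ∧ ∀ x : List α,
    (∀ n, m ≤ n → wordPow x n ∉ L) ∨ (∀ n, m ≤ n → wordPow x n ∈ L)

/-- A power-separating regular language. -/
def IsPowerSep (L : Language α) : Prop := L.IsRegular ∧ HasPowerSep L

/-- A suffix-closed (regular) language. -/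
def IsSuffixClosed (L : Language α) : Prop :=
  L.IsRegular ∧ ∀ x y : List α, x ++ y ∈ L → y ∈ L

/-- A circular (regular) language. -/
def IsCircular (L : Language α) : Prop :=
  L.IsRegular ∧ ∀ u v : List α, u ++ v ∈ L → v ++ u ∈ L

/-- A commutative (regular) language. -/
def IsCommutative (L : Language α) : Prop :=
  L.IsRegular ∧ ∀ w ∈ L, ∀ v : List α, w.Perm v → v ∈ L

/-- The reversal of a language. -/
def Reversal (L : Language α) : Language α := {w : List α | ∃ v ∈ L, w = v.reverse}

/-- Two families of languages are incomparable if neither is contained in the other. -/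
def Incomparable (P Q : Language α → Prop) : Prop :=
  (∃ L : Language α, P L ∧ ¬ Q L) ∧ (∃ L : Language α, Q L ∧ ¬ P L)

/-- A finite language. -/
def IsFiniteLang (L : Language α) : Prop := L.Finite


section AuxProof

open List

variable {α : Type}

lemma wordPow_single (a : α) : ∀ n, wordPow [a] n = List.replicate n a
  | 0 => rfl
  | n + 1 => by simp [wordPow, wordPow_single a n, List.replicate_succ]

/-- The witness language `(aa)∗ · b · ⊤`. -/
def L1 (a b : α) : Language α := ({[a,a]} : Language α)∗ * ({[b]} * (⊤ : Language α))

lemma flatten_replicate_pair (a : α) : ∀ n : ℕ,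
    (List.replicate n [a,a]).flatten = List.replicate (2*n) a
  | 0 => rfl
  | n + 1 => by
    rw [List.replicate_succ, List.flatten_cons, flatten_replicate_pair a n]
    have : 2 * (n+1) = (2*n) + 1 + 1 := by ring
    rw [this, List.replicate_succ, List.replicate_succ]
    rfl

lemma mem_aastar {a : α} {w : List α} :
    w ∈ ({[a,a]} : Language α)∗ ↔ ∃ n, w = List.replicate (2*n) a := by
  rw [Language.mem_kstar]
  constructor
  · rintro ⟨S, rfl, hS⟩
    refine ⟨S.length, ?_⟩
    rw [← flatten_replicate_pair a S.length]
    congr 1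
    exact List.eq_replicate_of_mem (fun y hy => hS y hy)
  · rintro ⟨n, rfl⟩
    exact ⟨List.replicate n [a,a], (flatten_replicate_pair a n).symm,
      fun y hy => (List.eq_of_mem_replicate hy) ▸ rfl⟩

lemma mem_bTop {b : α} {w : List α} :
    w ∈ ({[b]} : Language α) * (⊤ : Language α) ↔ ∃ u, w = b :: u := by
  rw [Language.mem_mul]
  constructor
  · rintro ⟨x, hx, y, -, rfl⟩
    change x = [b] at hx
    exact ⟨y, by rw [hx]; rfl⟩
  · rintro ⟨u, rfl⟩
    exact ⟨[b], rfl, u, trivial, rfl⟩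

lemma mem_L1 {a b : α} {w : List α} :
    w ∈ L1 a b ↔ ∃ n u, w = List.replicate (2*n) a ++ b :: u := by
  rw [L1, Language.mem_mul]
  constructor
  · rintro ⟨x, hx, y, hy, rfl⟩
    obtain ⟨n, rfl⟩ := mem_aastar.1 hx
    obtain ⟨u, rfl⟩ := mem_bTop.1 hy
    exact ⟨n, u, rfl⟩
  · rintro ⟨n, u, rfl⟩
    exact ⟨_, mem_aastar.2 ⟨n, rfl⟩, _, mem_bTop.2 ⟨u, rfl⟩, rfl⟩

lemma repl_eq {a b : α} (hab : a ≠ b) : ∀ (p q : ℕ) (s t : List α),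
    List.replicate p a ++ b :: s = List.replicate q a ++ b :: t → p = q
  | 0, 0, s, t, _ => rfl
  | 0, q+1, s, t, h => by
    rw [List.replicate_succ] at h
    simp only [List.replicate_zero, List.nil_append, List.cons_append, List.cons.injEq] at h
    exact absurd h.1.symm hab
  | p+1, 0, s, t, h => by
    rw [List.replicate_succ] at h
    simp only [List.replicate_zero, List.nil_append, List.cons_append, List.cons.injEq] at h
    exact absurd h.1 hab
  | p+1, q+1, s, t, h => by
    rw [List.replicate_succ, List.replicate_succ] at h
    simp only [List.cons_append, List.cons.injEq] at h
    exact congrArg Nat.succ (repl_eq hab p q s t h.2)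

lemma mem1 {a b : α} (n : ℕ) (s : List α) : List.replicate (2*n) a ++ b :: s ∈ L1 a b :=
  mem_L1.2 ⟨n, s, rfl⟩

lemma notmem1 {a b : α} (hab : a ≠ b) (n : ℕ) (s : List α) :
    List.replicate (2*n+1) a ++ b :: s ∉ L1 a b := by
  intro h
  obtain ⟨m, u, hm⟩ := mem_L1.1 h
  have := repl_eq hab _ _ _ _ hm
  omega

/-! ### DFAs -/

open Classical in
/-- A DFA for `L1 a b` (treating every letter other than `a` as `b`). -/
noncomputable def M1 (a : α) : DFA α (Fin 4) where
  step q c := if c = a then ![1,0,2,3] q else ![2,3,2,3] q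
  start := 0
  accept := {2}

lemma M1_step_cons (a : α) (q : Fin 4) (c : α) (w : List α) :
    (M1 a).evalFrom q (c :: w) = (M1 a).evalFrom ((M1 a).step q c) w := rfl

lemma M1_absorb (a : α) (q : Fin 4) (hq : q = 2 ∨ q = 3) :
    ∀ w : List α, (M1 a).evalFrom q w = q := by
  intro w
  induction w generalizing q with
  | nil => rfl
  | cons c w ih =>
    rw [M1_step_cons]
    have hstep : (M1 a).step q c = q := by
      rcases hq with rfl | rfl <;> simp [M1]
    rw [hstep]; exact ih q hq

lemma M1_eval {a b : α} (hab : a ≠ b) (hall : ∀ c : α, c = a ∨ c = b) :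
    ∀ w : List α,
      ((M1 a).evalFrom 0 w = 2 ↔ ∃ n u, w = List.replicate (2*n) a ++ b :: u) ∧
      ((M1 a).evalFrom 1 w = 2 ↔ ∃ n u, w = List.replicate (2*n+1) a ++ b :: u) := by
  intro w
  induction w with
  | nil =>
    constructor <;> constructor
    · intro h; exact absurd (show (0:Fin 4) = 2 from h) (by decide)
    · rintro ⟨n, u, h⟩; simp at h
    · intro h; exact absurd (show (1:Fin 4) = 2 from h) (by decide)
    · rintro ⟨n, u, h⟩; simp at h
  | cons c w ih =>
    rcases hall c with rfl | rfl
    · have h0 : (M1 c).step 0 c = 1 := by simp [M1]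
      have h1 : (M1 c).step 1 c = 0 := by simp [M1]
      constructor
      · rw [M1_step_cons, h0, ih.2]
        constructor
        · rintro ⟨n, u, rfl⟩
          refine ⟨n+1, u, ?_⟩
          have : 2*(n+1) = (2*n+1) + 1 := by ring
          rw [this, List.replicate_succ]; rfl
        · rintro ⟨n, u, h⟩
          match n, h with
          | 0, h => simp at h; exact absurd h.1 hab
          | n+1, h =>
            have h2 : 2*(n+1) = (2*n+1) + 1 := by ring
            rw [h2, List.replicate_succ] at h
            simp only [List.cons_append, List.cons.injEq, true_and] at h
            exact ⟨n, u, h⟩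
      · rw [M1_step_cons, h1, ih.1]
        constructor
        · rintro ⟨n, u, rfl⟩
          refine ⟨n, u, ?_⟩
          rw [List.replicate_succ]; rfl
        · rintro ⟨n, u, h⟩
          rw [List.replicate_succ] at h
          simp only [List.cons_append, List.cons.injEq, true_and] at h
          exact ⟨n, u, h⟩
    · have h0 : (M1 a).step 0 c = 2 := by simp [M1, if_neg (Ne.symm hab)]
      have h1 : (M1 a).step 1 c = 3 := by simp [M1, if_neg (Ne.symm hab)]
      constructor
      · rw [M1_step_cons, h0, M1_absorb a 2 (Or.inl rfl)]
        simp only [true_iff]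
        exact ⟨0, w, rfl⟩
      · rw [M1_step_cons, h1, M1_absorb a 3 (Or.inr rfl)]
        constructor
        · intro h; exact absurd (show (3:Fin 4) = 2 from h) (by decide)
        · rintro ⟨n, u, h⟩
          rw [List.replicate_succ] at h
          simp only [List.cons_append, List.cons.injEq] at h
          exact absurd h.1.symm hab

lemma L1_regular {a b : α} (hab : a ≠ b) (hall : ∀ c : α, c = a ∨ c = b) :
    (L1 a b).IsRegular := by
  refine ⟨Fin 4, inferInstance, M1 a, ?_⟩
  ext w
  rw [DFA.mem_accepts, mem_L1]
  show (M1 a).evalFrom 0 w ∈ ({2} : Set (Fin 4)) ↔ _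
  rw [Set.mem_singleton_iff]
  exact (M1_eval hab hall w).1

open Classical in
/-- A DFA for `{[a,a]}`. -/
noncomputable def M2 (a : α) : DFA α (Fin 4) where
  step q c := if c = a then ![1,2,3,3] q else ![3,3,3,3] q
  start := 0
  accept := {2}

lemma M2_step_cons (a : α) (q : Fin 4) (c : α) (w : List α) :
    (M2 a).evalFrom q (c :: w) = (M2 a).evalFrom ((M2 a).step q c) w := rfl

lemma M2_absorb (a : α) : ∀ w : List α, (M2 a).evalFrom 3 w = 3 := by
  intro w
  induction w with
  | nil => rfl
  | cons c w ih =>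
    rw [M2_step_cons]
    have hstep : (M2 a).step 3 c = 3 := by simp [M2]
    rw [hstep]; exact ih

lemma M2_eval (a : α) : ∀ w : List α,
    ((M2 a).evalFrom 0 w = 2 ↔ w = [a, a]) ∧
    ((M2 a).evalFrom 1 w = 2 ↔ w = [a]) ∧
    ((M2 a).evalFrom 2 w = 2 ↔ w = []) := by
  intro w
  induction w with
  | nil =>
    refine ⟨⟨fun h => absurd (show (0:Fin 4) = 2 from h) (by decide), fun h => by simp at h⟩,
      ⟨fun h => absurd (show (1:Fin 4) = 2 from h) (by decide), fun h => by simp at h⟩,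
      ⟨fun _ => rfl, fun _ => rfl⟩⟩
  | cons c w ih =>
    by_cases hc : c = a
    · subst hc
      have h0 : (M2 c).step 0 c = 1 := by simp [M2]
      have h1 : (M2 c).step 1 c = 2 := by simp [M2]
      have h2 : (M2 c).step 2 c = 3 := by simp [M2]
      refine ⟨?_, ?_, ?_⟩
      · rw [M2_step_cons, h0, ih.2.1]; simp
      · rw [M2_step_cons, h1, ih.2.2]; simp
      · rw [M2_step_cons, h2, M2_absorb _ w]
        exact ⟨fun h => absurd (show (3:Fin 4) = 2 from h) (by decide), fun h => by simp at h⟩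
    · have hstep : ∀ q : Fin 4, (M2 a).step q c = 3 := by
        intro q
        fin_cases q <;> simp [M2, hc]
      have hdead : ∀ q : Fin 4, (M2 a).evalFrom q (c :: w) = 3 := fun q => by
        rw [M2_step_cons, hstep q]; exact M2_absorb a w
      have hne : ¬ ((3:Fin 4) = 2) := by decide
      refine ⟨⟨fun h => absurd (hdead 0 ▸ h : (3:Fin 4) = 2) hne, fun h => ?_⟩,
        ⟨fun h => absurd (hdead 1 ▸ h : (3:Fin 4) = 2) hne, fun h => ?_⟩,
        ⟨fun h => absurd (hdead 2 ▸ h : (3:Fin 4) = 2) hne, fun h => by simp at h⟩⟩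
      · simp at h; exact absurd h.1 hc
      · simp at h; exact absurd h.1 hc

lemma aa_regular (a : α) : ({[a,a]} : Language α).IsRegular := by
  refine ⟨Fin 4, inferInstance, M2 a, ?_⟩
  ext w
  rw [DFA.mem_accepts]
  show (M2 a).evalFrom 0 w ∈ ({2} : Set (Fin 4)) ↔ _
  rw [Set.mem_singleton_iff, (M2_eval a w).1]
  exact Set.mem_singleton_iff.symm

/-- A (monotone) DFA for `{ε}`. -/
def M3 : DFA α Bool where
  step _ _ := true
  start := false
  accept := {false}

lemma M3_evalFrom (q : Bool) : ∀ w : List α, w ≠ [] → (M3.evalFrom q w : Bool) = true := by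
  intro w
  induction w generalizing q with
  | nil => intro h; exact absurd rfl h
  | cons c w ih =>
    intro _
    show M3.evalFrom true w = true
    rcases eq_or_ne w [] with rfl | hw
    · rfl
    · exact ih true hw

lemma M3_accepts : (M3 : DFA α Bool).accepts = (1 : Language α) := by
  ext w
  rw [DFA.mem_accepts]
  rcases eq_or_ne w [] with rfl | hw
  · simp [M3, Language.mem_one]
  · rw [show M3.eval w = M3.evalFrom false w from rfl, M3_evalFrom false w hw]
    simp [M3, Language.mem_one, hw]

lemma one_regular : (1 : Language α).IsRegular := ⟨Bool, inferInstance, M3, M3_accepts⟩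

/-! ### Generic lemmas -/

lemma iterate_eventually_const {σ : Type} [Fintype σ] [LinearOrder σ] {f : σ → σ}
    (hf : Monotone f) (q : σ) : ∃ m, ∀ n, m ≤ n → f^[n] q = f^[m] q := by
  obtain ⟨i, j, hne, heq⟩ := Finite.exists_ne_map_eq_of_infinite (fun n : ℕ => f^[n] q)
  wlog hij : i < j generalizing i j
  · exact this j i hne.symm heq.symm (by omega)
  set x := f^[i] q with hx
  have hpx : f^[j-i] x = x := by
    rw [hx, ← Function.iterate_add_apply, show (j - i) + i = j by omega]
    exact heq.symm
  have hfix : f x = x := by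
    rcases lt_trichotomy (f x) x with h | h | h
    · exfalso
      have chain : ∀ n, f^[n+1] x ≤ f^[n] x := fun n => by
        rw [Function.iterate_succ_apply]
        exact (hf.iterate n) h.le
      have hA : Antitone (fun n => f^[n] x) := antitone_nat_of_succ_le chain
      have : x ≤ f x := by
        have h2 := hA (show 1 ≤ j - i by omega)
        simpa [hpx] using h2
      exact absurd this (not_le.2 h)
    · exact h
    · exfalso
      have chain : ∀ n, f^[n] x ≤ f^[n+1] x := fun n => by
        rw [Function.iterate_succ_apply]
        exact (hf.iterate n) h.le
      have hA : Monotone (fun n => f^[n] x) := monotone_nat_of_le_succ chain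
      have : f x ≤ x := by
        have h2 := hA (show 1 ≤ j - i by omega)
        simpa [hpx] using h2
      exact absurd this (not_le.2 h)
  refine ⟨i, fun n hn => ?_⟩
  rw [show n = (n - i) + i by omega, Function.iterate_add_apply]
  exact Function.iterate_fixed hfix (n - i)

lemma evalFrom_replicate {σ : Type} (M : DFA α σ) (c : α) :
    ∀ (n : ℕ) (q : σ), M.evalFrom q (List.replicate n c) = (fun s => M.step s c)^[n] q
  | 0, q => rfl
  | n+1, q => by
    rw [List.replicate_succ]
    show M.evalFrom (M.step q c) (List.replicate n c) = _
    rw [evalFrom_replicate M c n (M.step q c), Function.iterate_succ_apply]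

lemma eps_of_mul {l m : Language α} (h : [] ∈ l * m) : [] ∈ l ∧ [] ∈ m := by
  obtain ⟨x, hx, y, hy, hxy⟩ := Language.mem_mul.1 h
  obtain ⟨rfl, rfl⟩ := List.append_eq_nil_iff.1 hxy
  exact ⟨hx, hy⟩

lemma exists_mem_ne_nil {G : Language α} (h0 : G ≠ 0) (h1 : G ≠ 1) : ∃ w ∈ G, w ≠ [] := by
  by_contra h
  push_neg at h
  have hne : ∃ v, v ∈ G := by
    by_contra h2
    push_neg at h2
    exact h0 (Set.eq_empty_iff_forall_notMem.2 h2)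
  obtain ⟨v, hv⟩ := hne
  have hv' := h v hv
  apply h1
  ext w
  rw [Language.mem_one]
  exact ⟨fun hw => h w hw, fun hw => hw ▸ (hv' ▸ hv)⟩

lemma mem_kstar_of_mem {G : Language α} {w : List α} (hw : w ∈ G) : w ∈ G∗ := by
  have := Language.join_mem_kstar (l := G) (L := [w]) (by simpa using hw)
  simpa using this

/-! ### `L1` is in all four P families -/

lemma L1_mul_le {a b : α} (G : Language α) : L1 a b * G ≤ L1 a b := by
  intro w hw
  obtain ⟨x, hx, y, hy, rfl⟩ := Language.mem_mul.1 hw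
  obtain ⟨n, u, rfl⟩ := mem_L1.1 hx
  have h : (List.replicate (2*n) a ++ b :: u) ++ y
      = List.replicate (2*n) a ++ b :: (u ++ y) := by simp
  rw [h]
  exact mem1 n (u ++ y)

lemma le_L1_mul {a b : α} {G : Language α} (hG : [] ∈ G) : L1 a b ≤ L1 a b * G :=
  fun w hw => Language.mem_mul.2 ⟨w, hw, [], hG, List.append_nil w⟩

lemma L1_mul_top {a b : α} : L1 a b * (⊤ : Language α) = L1 a b :=
  _root_.le_antisymm (L1_mul_le ⊤) (le_L1_mul trivial)

lemma L1_mul_kstar {a b : α} (G : Language α) : L1 a b * G∗ = L1 a b :=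
  _root_.le_antisymm (L1_mul_le _) (le_L1_mul (Language.nil_mem_kstar G))

lemma kstar_mul_L1 {a b : α} : ({[a,a]} : Language α)∗ * L1 a b = L1 a b := by
  apply _root_.le_antisymm
  · intro w hw
    obtain ⟨x, hx, y, hy, rfl⟩ := Language.mem_mul.1 hw
    obtain ⟨m, rfl⟩ := mem_aastar.1 hx
    obtain ⟨n, u, rfl⟩ := mem_L1.1 hy
    have h : List.replicate (2*m) a ++ (List.replicate (2*n) a ++ b :: u)
        = List.replicate (2*(m+n)) a ++ b :: u := by
      rw [show 2*(m+n) = 2*m + 2*n by ring, List.replicate_add, List.append_assoc]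
    rw [h]
    exact mem1 (m+n) u
  · exact fun w hw => Language.mem_mul.2 ⟨[], Language.nil_mem_kstar _, w, hw, rfl⟩

lemma aa_ne_zero {a : α} : ({[a,a]} : Language α) ≠ 0 := by
  intro h
  have h2 : [a,a] ∈ ({[a,a]} : Language α) := rfl
  rw [h] at h2
  exact h2

lemma aa_ne_one {a : α} : ({[a,a]} : Language α) ≠ 1 := by
  intro h
  have h2 : [a,a] ∈ ({[a,a]} : Language α) := rfl
  rw [h] at h2
  simp [Language.mem_one] at h2

lemma sydef_L1 {a b : α} (hab : a ≠ b) (hall : ∀ c : α, c = a ∨ c = b) :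
    IsSymDef (L1 a b) :=
  ⟨L1 a b, 1, L1_regular hab hall, one_regular, by rw [mul_one, L1_mul_top]⟩

lemma lcom_L1 {a b : α} (hab : a ≠ b) (hall : ∀ c : α, c = a ∨ c = b) :
    IsLeftComet (L1 a b) :=
  ⟨L1 a b, {[a,a]}, L1_regular hab hall, aa_regular a, aa_ne_zero, aa_ne_one,
    (L1_mul_kstar _).symm⟩

lemma rcom_L1 {a b : α} (hab : a ≠ b) (hall : ∀ c : α, c = a ∨ c = b) :
    IsRightComet (L1 a b) :=
  ⟨{[a,a]}, L1 a b, aa_regular a, L1_regular hab hall, aa_ne_zero, aa_ne_one,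
    kstar_mul_L1.symm⟩

lemma tcom_L1 {a b : α} (hab : a ≠ b) (hall : ∀ c : α, c = a ∨ c = b) :
    IsTwoComet (L1 a b) :=
  ⟨L1 a b, {[a,a]}, 1, L1_regular hab hall, aa_regular a, one_regular,
    aa_ne_zero, aa_ne_one, by rw [mul_one, L1_mul_kstar]⟩

/-! ### `L1` is in none of the five Q families -/

lemma not_fin_L1 {a b : α} (hab : a ≠ b) : ¬ IsFiniteLang (L1 a b) := by
  intro hfin
  have hinj : Function.Injective (fun n : ℕ => List.replicate (2*n) a ++ [b]) := by
    intro n m h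
    have := repl_eq hab _ _ _ _ h
    omega
  exact Set.infinite_of_injective_forall_mem hinj (fun n => mem1 n []) hfin

lemma not_nil_L1 {a b : α} (hab : a ≠ b) : ¬ IsNilpotentLang (L1 a b) := by
  rintro (hf | hc)
  · exact not_fin_L1 hab hf
  · have hinj : Function.Injective (fun n : ℕ => List.replicate (2*n+1) a ++ [b]) := by
      intro n m h
      have := repl_eq hab _ _ _ _ h
      omega
    exact Set.infinite_of_injective_forall_mem hinj (fun n => notmem1 hab n []) hc

lemma not_def_L1 {a b : α} (hab : a ≠ b) : ¬ IsDefinite (L1 a b) := by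
  rintro ⟨A, B, hA, hB, h⟩
  obtain ⟨N, hN⟩ : ∃ N, ∀ w ∈ A, w.length ≤ N := by
    obtain ⟨N, hN⟩ := (hA.image List.length).bddAbove
    exact ⟨N, fun w hw => hN (Set.mem_image_of_mem _ hw)⟩
  have hw : List.replicate (2*(N+1)) a ++ [b] ∈ L1 a b := mem1 (N+1) []
  rw [h] at hw
  rcases (Language.mem_add _ _ _).1 hw with hw | hw
  · have := hN _ hw
    simp at this
    omega
  · obtain ⟨x, hx, v, hv, hxv⟩ := Language.mem_mul.1 hw
    have hmem : List.replicate (2*(N+1)+1) a ++ [b] ∈ L1 a b := by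
      rw [h]
      refine (Language.mem_add _ _ _).2 (Or.inr (Language.mem_mul.2 ⟨a :: x, trivial, v, hv, ?_⟩))
      rw [show (a :: x) ++ v = a :: (x ++ v) from rfl, hxv, List.replicate_succ]
      rfl
    exact notmem1 hab (N+1) [] hmem

lemma not_ord_L1 {a b : α} (hab : a ≠ b) : ¬ IsOrdered (L1 a b) := by
  rintro ⟨σ, _, _, M, hmono, hacc⟩
  obtain ⟨m, hm⟩ := iterate_eventually_const (hmono a) M.start
  have key : ∀ n : ℕ, M.eval (List.replicate n a ++ [b])
      = M.step ((fun s => M.step s a)^[n] M.start) b := by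
    intro n
    rw [DFA.eval, DFA.evalFrom_of_append, evalFrom_replicate]
    rfl
  have h1 : List.replicate (2*m) a ++ [b] ∈ M.accepts := by
    rw [hacc]; exact mem1 m []
  have h2 : List.replicate (2*m+1) a ++ [b] ∉ M.accepts := by
    rw [hacc]; exact notmem1 hab m []
  rw [DFA.mem_accepts, key, hm (2*m) (by omega)] at h1
  rw [DFA.mem_accepts, key, hm (2*m+1) (by omega)] at h2
  exact h2 h1

lemma not_hnc_L1 {a b : α} (hab : a ≠ b) : ¬ HasNonCounting (L1 a b) := by
  rintro ⟨k, hk, hiff⟩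
  have h := hiff [] [a] [b]
  rw [wordPow_single, wordPow_single] at h
  simp only [List.nil_append] at h
  rcases Nat.even_or_odd k with ⟨n, rfl⟩ | ⟨n, rfl⟩
  · rw [show n + n = 2*n by ring] at h
    exact notmem1 hab n [] (h.1 (mem1 n []))
  · rw [show 2*n+1+1 = 2*(n+1) by ring] at h
    exact notmem1 hab n [] (h.2 (mem1 (n+1) []))

/-! ### `1` is in all five Q families -/

lemma one_finite : IsFiniteLang (1 : Language α) := by
  have h : (1 : Language α) = ({[]} : Set (List α)) :=
    Set.ext fun w => by exact (Language.mem_one w).trans Set.mem_singleton_iff.symm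
  rw [IsFiniteLang, h]
  exact Set.finite_singleton _

lemma one_nil : IsNilpotentLang (1 : Language α) := Or.inl one_finite

lemma one_def : IsDefinite (1 : Language α) :=
  ⟨1, 0, one_finite, Set.finite_empty, by rw [mul_zero, add_zero]⟩

lemma one_ord : IsOrdered (1 : Language α) :=
  ⟨Bool, inferInstance, inferInstance, M3, fun _ => monotone_const, M3_accepts⟩

lemma one_nc : IsNonCounting (1 : Language α) := by
  refine ⟨one_regular, 1, le_refl 1, fun x y z => ?_⟩
  have e1 : wordPow y 1 = y ++ [] := rfl
  have e2 : wordPow y (1+1) = y ++ (y ++ []) := rfl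
  rw [e1, e2]
  simp only [Language.mem_one, List.append_eq_nil_iff, List.append_nil]
  tauto

/-! ### `1` is in none of the four P families -/

lemma not_sydef_one (a : α) : ¬ IsSymDef (1 : Language α) := by
  rintro ⟨E, H, -, -, h⟩
  have h0 : [] ∈ E * (⊤ : Language α) * H := by rw [← h]; exact (Language.mem_one _).2 rfl
  obtain ⟨h1, hH⟩ := eps_of_mul h0
  obtain ⟨hE, -⟩ := eps_of_mul h1
  have hmem : [a] ∈ E * (⊤ : Language α) * H :=
    Language.mem_mul.2 ⟨[a], Language.mem_mul.2 ⟨[], hE, [a], trivial, rfl⟩, [], hH,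
      List.append_nil _⟩
  rw [← h] at hmem
  simp [Language.mem_one] at hmem

lemma not_lcom_one : ¬ IsLeftComet (1 : Language α) := by
  rintro ⟨E, G, -, -, h0, h1, h⟩
  obtain ⟨w, hwG, hw⟩ := exists_mem_ne_nil h0 h1
  have he : [] ∈ E * G∗ := by rw [← h]; exact (Language.mem_one _).2 rfl
  have hE := (eps_of_mul he).1
  have hmem : w ∈ E * G∗ := Language.mem_mul.2 ⟨[], hE, w, mem_kstar_of_mem hwG, rfl⟩
  rw [← h] at hmem
  exact hw ((Language.mem_one _).1 hmem)

lemma not_rcom_one : ¬ IsRightComet (1 : Language α) := by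
  rintro ⟨G, H, -, -, h0, h1, h⟩
  obtain ⟨w, hwG, hw⟩ := exists_mem_ne_nil h0 h1
  have he : [] ∈ G∗ * H := by rw [← h]; exact (Language.mem_one _).2 rfl
  have hH := (eps_of_mul he).2
  have hmem : w ∈ G∗ * H :=
    Language.mem_mul.2 ⟨w, mem_kstar_of_mem hwG, [], hH, List.append_nil _⟩
  rw [← h] at hmem
  exact hw ((Language.mem_one _).1 hmem)

lemma not_tcom_one : ¬ IsTwoComet (1 : Language α) := by
  rintro ⟨E, G, H, -, -, -, h0, h1, h⟩
  obtain ⟨w, hwG, hw⟩ := exists_mem_ne_nil h0 h1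
  have he : [] ∈ E * G∗ * H := by rw [← h]; exact (Language.mem_one _).2 rfl
  obtain ⟨he1, hH⟩ := eps_of_mul he
  obtain ⟨hE, -⟩ := eps_of_mul he1
  have hmem : w ∈ E * G∗ * H :=
    Language.mem_mul.2 ⟨w, Language.mem_mul.2 ⟨[], hE, w, mem_kstar_of_mem hwG, rfl⟩, [], hH,
      List.append_nil _⟩
  rw [← h] at hmem
  exact hw ((Language.mem_one _).1 hmem)

end AuxProof

/-- Over a two-letter alphabet, `SYDEF`, `LCOM`, `RCOM`, and `2COM` are each incomparable
to each of `FIN`, `NIL`, `DEF`, `ORD`, and `NC`. -/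
theorem sydef_comets_incomparable_fin_nil_def_ord_nc [Fintype α] (a b : α)
    (hab : a ≠ b) (hall : ∀ c : α, c = a ∨ c = b) :
    ∀ P ∈ ([IsSymDef, IsLeftComet, IsRightComet, IsTwoComet] : List (Language α → Prop)),
    ∀ Q ∈ ([IsFiniteLang, IsNilpotentLang, IsDefinite, IsOrdered, IsNonCounting] :
      List (Language α → Prop)),
    Incomparable P Q := by
  intro P hP Q hQ
  simp only [List.mem_cons, List.not_mem_nil, or_false] at hP hQ
  have hPp : P (L1 a b) ∧ ¬ P (1 : Language α) := by
    rcases hP with rfl | rfl | rfl | rfl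
    · exact ⟨sydef_L1 hab hall, not_sydef_one a⟩
    · exact ⟨lcom_L1 hab hall, not_lcom_one⟩
    · exact ⟨rcom_L1 hab hall, not_rcom_one⟩
    · exact ⟨tcom_L1 hab hall, not_tcom_one⟩
  have hQp : Q (1 : Language α) ∧ ¬ Q (L1 a b) := by
    rcases hQ with rfl | rfl | rfl | rfl | rfl
    · exact ⟨one_finite, not_fin_L1 hab⟩
    · exact ⟨one_nil, not_nil_L1 hab⟩
    · exact ⟨one_def, not_def_L1 hab⟩
    · exact ⟨one_ord, not_ord_L1 hab⟩
    · exact ⟨one_nc, fun hq => not_hnc_L1 hab hq.2⟩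
  exact ⟨⟨L1 a b, hPp.1, hQp.2⟩, ⟨1, hQp.1, hPp.2⟩⟩
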